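/- Let n ≥ 1, let ν ≥ 0 be real, let λ ∈ ℂ and let θ ∈ ℂⁿ with |θ| = 1. Then the function z ↦ P_λ^ν(z,θ) = ((1 − |z|²)/|1 − ⟨z,θ⟩|²)^{(iλ+n)/2} ((1 − \overline{⟨z,θ⟩})/(1 − ⟨z,θ⟩))^ν on the unit ball 𝔹ⁿ (the powers taken with the principal branch, which is well defined since Re(1 − ⟨z,θ⟩) > 0 for |z| < 1) satisfies H_ν P_λ^ν(·,θ) = (λ² + 4ν² + n²) P_λ^ν(·,θ). -/

import Mathlib

open MeasureTheory Complex Metric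
open scoped BigOperators ComplexConjugate

noncomputable section

/-- `ℂⁿ` with its Euclidean (Hermitian) inner-product structure. -/
abbrev En (n : ℕ) := EuclideanSpace ℂ (Fin n)

instance (n : ℕ) : MeasurableSpace (En n) := borel _
instance (n : ℕ) : BorelSpace (En n) := ⟨rfl⟩

/-- Generalized binomial coefficient `C(a,k) = (a-k+1)_k / k!`. -/
def genBinom (a : ℝ) (k : ℕ) : ℝ := (ascPochhammer ℝ k).eval (a - k + 1) / (Nat.factorial k)

/-- Jacobi polynomial
`P_m^{(α,β)}(x) = Σ_{s=0}^m C(m+α, m-s) C(m+β, s) ((x-1)/2)^s ((x+1)/2)^{m-s}`. -/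
def jacobiP (m : ℕ) (α β : ℝ) (x : ℝ) : ℝ :=
  ∑ s ∈ Finset.range (m + 1),
    genBinom (m + α) (m - s) * genBinom (m + β) s * ((x - 1) / 2) ^ s * ((x + 1) / 2) ^ (m - s)

/-- The Hermitian pairing `⟨z,w⟩ = Σ_j z_j conj (w_j)` used in the paper. -/
def hinner {n : ℕ} (z w : En n) : ℂ := ∑ j, z j * conj (w j)

/-- Wirtinger derivative `∂/∂z_j = (∂/∂x_j - i ∂/∂y_j)/2`. -/
def wd {n : ℕ} (f : En n → ℂ) (z : En n) (j : Fin n) : ℂ :=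
  (fderiv ℝ f z (EuclideanSpace.single j 1)
    - Complex.I * fderiv ℝ f z (EuclideanSpace.single j Complex.I)) / 2

/-- Wirtinger derivative `∂/∂z̄_j = (∂/∂x_j + i ∂/∂y_j)/2`. -/
def wdbar {n : ℕ} (f : En n → ℂ) (z : En n) (j : Fin n) : ℂ :=
  (fderiv ℝ f z (EuclideanSpace.single j 1)
    + Complex.I * fderiv ℝ f z (EuclideanSpace.single j Complex.I)) / 2

/-- The magnetic Schrödinger operator
`H_ν = -4(1-|z|²)[ Σ_{i,j} (δ_{ij} - z_i z̄_j) ∂²/∂z_i∂z̄_j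
      + ν Σ_j (z_j ∂/∂z_j - z̄_j ∂/∂z̄_j) + ν² ] + 4ν²`. -/
def Hnu {n : ℕ} (ν : ℝ) (f : En n → ℂ) (z : En n) : ℂ :=
  -4 * (1 - (‖z‖ : ℂ) ^ 2) *
      ((∑ i, ∑ j, ((if i = j then 1 else 0) - z i * conj (z j)) * wd (fun w => wdbar f w j) z i)
        + (ν : ℂ) * (∑ j, (z j * wd f z j - conj (z j) * wdbar f z j))
        + (ν : ℂ) ^ 2 * f z)
    + 4 * (ν : ℂ) ^ 2 * f z

namespace PKAux
variable {n : ℕ}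
local notation "⟪" x ", " y "⟫" => @inner ℂ _ _ x y

lemma hinner_eq (z w : En n) : hinner z w = ⟪w, z⟫ := by
  simp [hinner, PiLp.inner_apply, mul_comm]

lemma hinner_self (w : En n) : hinner w w = ((‖w‖^2 : ℝ) : ℂ) := by
  rw [hinner_eq]
  rw [inner_self_eq_norm_sq_to_K]
  norm_cast

lemma abs_hinner_le (z w : En n) : ‖hinner z w‖ ≤ ‖z‖ * ‖w‖ := by
  rw [hinner_eq]
  calc ‖⟪w, z⟫‖ = ‖⟪w, z⟫‖ := rfl
    _ ≤ ‖w‖ * ‖z‖ := norm_inner_le_norm w z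
    _ = ‖z‖ * ‖w‖ := mul_comm _ _

lemma re_pos_of_lt (c : ℂ) (h : ‖c‖ < 1) : 0 < (1 - c).re := by
  have : c.re ≤ ‖c‖ := Complex.re_le_norm c
  simp only [Complex.sub_re, Complex.one_re]
  linarith

lemma log_div_of_pos_re {a b : ℂ} (ha : 0 < a.re) (hb : 0 < b.re) :
    Complex.log (a / b) = Complex.log a - Complex.log b := by
  have ha0 : a ≠ 0 := fun h => by simp [h] at ha
  have hb0 : b ≠ 0 := fun h => by simp [h] at hb
  have hexp : Complex.exp (Complex.log (a/b)) = Complex.exp (Complex.log a - Complex.log b) := by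
    rw [Complex.exp_log (div_ne_zero ha0 hb0), Complex.exp_sub,
      Complex.exp_log ha0, Complex.exp_log hb0]
  obtain ⟨k, hk⟩ := Complex.exp_eq_exp_iff_exists_int.mp hexp
  have him : Complex.arg (a/b) = (Complex.arg a - Complex.arg b) + k * (2*Real.pi) := by
    have := congrArg Complex.im hk
    simpa [Complex.log_im, Complex.add_im, Complex.sub_im, Complex.mul_im] using this
  have hargA : |Complex.arg a| < Real.pi/2 :=
    Complex.abs_arg_lt_pi_div_two_iff.mpr (Or.inl ha)
  have hargB : |Complex.arg b| < Real.pi/2 :=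
    Complex.abs_arg_lt_pi_div_two_iff.mpr (Or.inl hb)
  have h1 := Complex.neg_pi_lt_arg (a/b)
  have h2 := Complex.arg_le_pi (a/b)
  have habs : |(k:ℝ) * (2*Real.pi)| < 2*Real.pi := by
    have hA := abs_lt.mp hargA
    have hB := abs_lt.mp hargB
    rw [abs_lt]
    constructor <;> nlinarith [Real.pi_pos]
  have habs2 : |(k:ℝ)| < 1 := by
    rw [abs_mul, abs_of_pos (by positivity : (0:ℝ) < 2*Real.pi)] at habs
    nlinarith [Real.pi_pos, abs_nonneg (k:ℝ)]
  have hk0 : k = 0 := by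
    have : ((|k| : ℤ) : ℝ) < 1 := by rw [Int.cast_abs]; exact habs2
    have h' : |k| < 1 := by exact_mod_cast this
    rcases abs_lt.mp h' with ⟨h1', h2'⟩
    omega
  have hk0 : (k:ℝ) = 0 := by exact_mod_cast hk0
  have : (k:ℂ) = 0 := by exact_mod_cast hk0
  rw [hk, this]; ring


/-- The function `g` whose exponential is the Poisson kernel. -/
def gfun (θ : En n) (s ν : ℂ) (w : En n) : ℂ :=
  s * Complex.log (1 - hinner w w) + (-(s+ν)) * Complex.log (1 - hinner w θ)
    + ((ν:ℂ) - s) * Complex.log (conj (1 - hinner w θ))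

lemma kernel_eq_exp {θ : En n} (hθ : ‖θ‖ = 1) {w : En n} (hw : ‖w‖ < 1) (s : ℂ) (ν : ℝ) :
    (((1 - ‖w‖^2)/‖1 - hinner w θ‖^2 : ℝ):ℂ) ^ s
      * ((1 - conj (hinner w θ))/(1 - hinner w θ)) ^ (ν:ℂ)
    = Complex.exp (gfun θ s ν w) := by
  set c : ℂ := hinner w θ with hc
  have habs : ‖c‖ < 1 := by
    calc ‖c‖ ≤ ‖w‖ * ‖θ‖ := abs_hinner_le w θ
      _ = ‖w‖ := by rw [hθ, mul_one]
      _ < 1 := hw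
  have hAre : 0 < (1 - c).re := re_pos_of_lt c habs
  have hA0 : (1 - c) ≠ 0 := fun h => by simp [h] at hAre
  have hBre : 0 < (conj (1 - c)).re := by rwa [Complex.conj_re]
  have hB0 : conj (1 - c) ≠ 0 := fun h => by simp [h] at hBre
  have hu : (0:ℝ) < 1 - ‖w‖^2 := by nlinarith [norm_nonneg w]
  have hnA : (0:ℝ) < ‖(1 - c)‖^2 := by
    have : (0:ℝ) < ‖(1-c : ℂ)‖ := norm_pos_iff.mpr hA0
    positivity
  have hR : (0:ℝ) < (1 - ‖w‖^2)/‖1 - c‖^2 := div_pos hu hnA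
  -- rewrite conj (hinner w θ) as conj (1 - c) stuff
  have hconj : (1 : ℂ) - conj c = conj (1 - c) := by rw [map_sub, map_one]
  -- first factor
  have h1 : (((1 - ‖w‖^2)/‖1 - c‖^2 : ℝ):ℂ) ^ s
      = Complex.exp (s * Complex.log (((1 - ‖w‖^2)/‖1 - c‖^2 : ℝ):ℂ)) := by
    rw [Complex.cpow_def_of_ne_zero (by exact_mod_cast hR.ne')]
    congr 1
    ring
  -- log of the real ratio
  have hlogR : Complex.log (((1 - ‖w‖^2)/‖1 - c‖^2 : ℝ):ℂ)
      = Complex.log (1 - hinner w w) - (Complex.log (1-c) + Complex.log (conj (1-c))) := by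
    have e1 : Complex.log (1 - hinner w w) = ((Real.log (1 - ‖w‖^2) : ℝ) : ℂ) := by
      rw [hinner_self]
      rw [← Complex.ofReal_one, ← Complex.ofReal_sub, ← Complex.ofReal_log hu.le]
    have e2 : Complex.log (1-c) + Complex.log (conj (1-c))
        = ((Real.log (‖1 - c‖^2) : ℝ) : ℂ) := by
      rw [Complex.log_conj _ (by
        have := Complex.abs_arg_lt_pi_div_two_iff.mpr (Or.inl hAre)
        intro h
        rw [h] at this
        have := abs_lt.mp this
        nlinarith [Real.pi_pos])]
      rw [Complex.add_conj]
      have : (Complex.log (1-c)).re = Real.log ‖1-c‖ := Complex.log_re _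
      rw [this]
      rw [Real.log_pow]
      push_cast
      ring
    rw [← Complex.ofReal_log hR.le, Real.log_div hu.ne' hnA.ne', e1, e2]
    push_cast
    ring
  -- second factor
  have h2 : ((1 - conj c)/(1 - c)) ^ (ν:ℂ)
      = Complex.exp ((ν:ℂ) * (Complex.log (conj (1-c)) - Complex.log (1-c))) := by
    rw [hconj, Complex.cpow_def_of_ne_zero (div_ne_zero hB0 hA0),
      log_div_of_pos_re hBre hAre]
    congr 1
    ring
  rw [h1, h2, hlogR, ← Complex.exp_add, gfun]
  congr 1
  ring


section DerivStuff
variable {n : ℕ}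

/-- derivative of `v ↦ 1 - hinner v θ` -/
def DA (θ : En n) : En n →L[ℝ] ℂ := -((innerSL ℂ θ).restrictScalars ℝ)

/-- derivative of `v ↦ 1 - hinner v v` at `w` -/
def DU (w : En n) : En n →L[ℝ] ℂ :=
  -((fderivInnerCLM ℂ (w, w)).comp
      ((ContinuousLinearMap.id ℝ (En n)).prod (ContinuousLinearMap.id ℝ (En n))))

/-- derivative of `v ↦ conj (1 - hinner v θ)` -/
def DB (θ : En n) : En n →L[ℝ] ℂ :=
  (Complex.conjCLE.toContinuousLinearMap).comp (DA θ)

/-- derivative of the coordinate `v ↦ v j` -/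
def DC (j : Fin n) : En n →L[ℝ] ℂ := (EuclideanSpace.proj (𝕜 := ℂ) j).restrictScalars ℝ

lemma hasF_A (θ : En n) (w : En n) :
    HasFDerivAt (fun v : En n => (1:ℂ) - hinner v θ) (DA θ) w := by
  have h : HasFDerivAt (fun v : En n => hinner v θ) ((innerSL ℂ θ).restrictScalars ℝ) w := by
    have heq : (fun v : En n => hinner v θ)
        = fun v => ((innerSL ℂ θ).restrictScalars ℝ) v := by
      funext v
      simp [hinner_eq]
    rw [heq]
    exact ((innerSL ℂ θ).restrictScalars ℝ).hasFDerivAt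
  simpa [DA] using h.const_sub 1

lemma hasF_U (w : En n) :
    HasFDerivAt (fun v : En n => (1:ℂ) - hinner v v) (DU w) w := by
  have h : HasFDerivAt (fun v : En n => hinner v v)
      ((fderivInnerCLM ℂ (w, w)).comp
        ((ContinuousLinearMap.id ℝ (En n)).prod (ContinuousLinearMap.id ℝ (En n)))) w := by
    have heq : (fun v : En n => hinner v v) = fun v : En n => (inner ℂ v v : ℂ) := by
      funext v
      simp [hinner_eq]
    rw [heq]
    exact (hasFDerivAt_id w).inner ℂ (hasFDerivAt_id w)
  simpa [DU] using h.const_sub 1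

lemma hasF_B (θ : En n) (w : En n) :
    HasFDerivAt (fun v : En n => conj ((1:ℂ) - hinner v θ)) (DB θ) w := by
  have h := (Complex.conjCLE.toContinuousLinearMap.hasFDerivAt
      (x := (1:ℂ) - hinner w θ)).comp w (hasF_A θ w)
  have heq : (fun v : En n => conj ((1:ℂ) - hinner v θ))
      = (⇑Complex.conjCLE ∘ fun v : En n => (1:ℂ) - hinner v θ) := by
    funext v
    simp [Function.comp]
  rw [heq]
  exact h

lemma hasF_C (j : Fin n) (w : En n) :
    HasFDerivAt (fun v : En n => v j) (DC j) w := by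
  have heq : (fun v : En n => v j) = fun v => ((EuclideanSpace.proj (𝕜 := ℂ) j).restrictScalars ℝ) v := by
    funext v; rfl
  rw [heq]
  exact _root_.ContinuousLinearMap.hasFDerivAt _

-- evaluation lemmas
lemma DA_apply (θ : En n) (j : Fin n) (x : ℂ) :
    DA θ (EuclideanSpace.single j x) = -(x * conj (θ j)) := by
  simp [DA, EuclideanSpace.inner_single_right]

lemma DB_apply (θ : En n) (j : Fin n) (x : ℂ) :
    DB θ (EuclideanSpace.single j x) = -(conj x * θ j) := by
  simp [DB, DA, EuclideanSpace.inner_single_right]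

lemma DU_apply (w : En n) (j : Fin n) (x : ℂ) :
    DU w (EuclideanSpace.single j x) = -(x * conj (w j) + conj x * w j) := by
  simp [DU, fderivInnerCLM_apply, PiLp.inner_apply, EuclideanSpace.single_apply,
    apply_ite conj, map_zero, ite_mul, zero_mul, mul_ite, mul_zero,
    Finset.sum_ite_eq', Finset.mem_univ]
  ring

lemma DC_apply (j i : Fin n) (x : ℂ) :
    DC i (EuclideanSpace.single j x) = if i = j then x else 0 := by
  simp [DC, EuclideanSpace.single_apply]

end DerivStuff

section MainDeriv
variable {n : ℕ}

/-- first-order factor appearing in `∂̄_j (exp g)` -/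
def Mfun (θ : En n) (s ν : ℂ) (j : Fin n) (w : En n) : ℂ :=
  -(s * (w j) * (1 - hinner w w)⁻¹) - (ν - s) * (θ j) * (conj (1 - hinner w θ))⁻¹

lemma hasF_g (θ : En n) (s ν : ℂ) (w : En n)
    (hU : (1 - hinner w w) ∈ Complex.slitPlane)
    (hA : (1 - hinner w θ) ∈ Complex.slitPlane)
    (hB : (conj (1 - hinner w θ)) ∈ Complex.slitPlane) :
    HasFDerivAt (gfun θ s ν)
      (s • ((1 - hinner w w)⁻¹ • DU w) + (-(s+ν)) • ((1 - hinner w θ)⁻¹ • DA θ)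
        + ((ν:ℂ) - s) • ((conj (1 - hinner w θ))⁻¹ • DB θ)) w := by
  have t1 : HasFDerivAt (fun v : En n => Complex.log (1 - hinner v v))
      ((1 - hinner w w)⁻¹ • DU w) w := by
    have := (Complex.hasDerivAt_log hU).comp_hasFDerivAt w (hasF_U w)
    simpa [Function.comp_def] using this
  have t2 : HasFDerivAt (fun v : En n => Complex.log (1 - hinner v θ))
      ((1 - hinner w θ)⁻¹ • DA θ) w := by
    have := (Complex.hasDerivAt_log hA).comp_hasFDerivAt w (hasF_A θ w)
    simpa [Function.comp_def] using this
  have t3 : HasFDerivAt (fun v : En n => Complex.log (conj (1 - hinner v θ)))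
      ((conj (1 - hinner w θ))⁻¹ • DB θ) w := by
    have := (Complex.hasDerivAt_log hB).comp_hasFDerivAt w (hasF_B θ w)
    simpa [Function.comp_def] using this
  have := ((t1.const_mul s).add (t2.const_mul (-(s+ν)))).add (t3.const_mul ((ν:ℂ) - s))
  exact this

lemma hasF_expg (θ : En n) (s ν : ℂ) (w : En n)
    (hU : (1 - hinner w w) ∈ Complex.slitPlane)
    (hA : (1 - hinner w θ) ∈ Complex.slitPlane)
    (hB : (conj (1 - hinner w θ)) ∈ Complex.slitPlane) :
    HasFDerivAt (fun v => Complex.exp (gfun θ s ν v))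
      (Complex.exp (gfun θ s ν w) •
        (s • ((1 - hinner w w)⁻¹ • DU w) + (-(s+ν)) • ((1 - hinner w θ)⁻¹ • DA θ)
          + ((ν:ℂ) - s) • ((conj (1 - hinner w θ))⁻¹ • DB θ))) w := by
  have := (Complex.hasDerivAt_exp (gfun θ s ν w)).comp_hasFDerivAt w (hasF_g θ s ν w hU hA hB)
  simpa [Function.comp_def] using this

lemma wd_expg (θ : En n) (s ν : ℂ) (w : En n)
    (hU : (1 - hinner w w) ∈ Complex.slitPlane)
    (hA : (1 - hinner w θ) ∈ Complex.slitPlane)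
    (hB : (conj (1 - hinner w θ)) ∈ Complex.slitPlane) (j : Fin n) :
    wd (fun v => Complex.exp (gfun θ s ν v)) w j
      = Complex.exp (gfun θ s ν w) *
          (-(s * (1 - hinner w w)⁻¹ * conj (w j)) + (s+ν) * (1 - hinner w θ)⁻¹ * conj (θ j)) := by
  rw [wd, (hasF_expg θ s ν w hU hA hB).fderiv]
  simp only [ContinuousLinearMap.add_apply, ContinuousLinearMap.smul_apply,
    DA_apply, DB_apply, DU_apply, smul_eq_mul]
  simp [Complex.conj_I]
  ring_nf
  simp [Complex.I_sq]
  ring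

lemma wdbar_expg (θ : En n) (s ν : ℂ) (w : En n)
    (hU : (1 - hinner w w) ∈ Complex.slitPlane)
    (hA : (1 - hinner w θ) ∈ Complex.slitPlane)
    (hB : (conj (1 - hinner w θ)) ∈ Complex.slitPlane) (j : Fin n) :
    wdbar (fun v => Complex.exp (gfun θ s ν v)) w j
      = Complex.exp (gfun θ s ν w) * Mfun θ s ν j w := by
  rw [wdbar, (hasF_expg θ s ν w hU hA hB).fderiv]
  simp only [ContinuousLinearMap.add_apply, ContinuousLinearMap.smul_apply,
    DA_apply, DB_apply, DU_apply, smul_eq_mul]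
  simp [Complex.conj_I, Mfun]
  ring_nf
  simp [Complex.I_sq]
  ring


lemma hasF_M (θ : En n) (s ν : ℂ) (j : Fin n) (w : En n)
    (hU0 : (1 - hinner w w) ≠ 0) (hB0 : (conj (1 - hinner w θ)) ≠ 0) :
    HasFDerivAt (Mfun θ s ν j)
      ((-s) • ((w j) • ((-((1 - hinner w w) ^ 2)⁻¹) • DU w)
          + (1 - hinner w w)⁻¹ • DC j)
        + (-((ν - s) * θ j)) • ((-((conj (1 - hinner w θ)) ^ 2)⁻¹) • DB θ)) w := by
  have tUinv : HasFDerivAt (fun v : En n => (1 - hinner v v)⁻¹)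
      ((-((1 - hinner w w) ^ 2)⁻¹) • DU w) w := by
    have := (hasDerivAt_inv hU0).comp_hasFDerivAt w (hasF_U w)
    simpa [Function.comp_def] using this
  have tBinv : HasFDerivAt (fun v : En n => (conj (1 - hinner v θ))⁻¹)
      ((-((conj (1 - hinner w θ)) ^ 2)⁻¹) • DB θ) w := by
    have := (hasDerivAt_inv hB0).comp_hasFDerivAt w (hasF_B θ w)
    simpa [Function.comp_def] using this
  have tprod := (hasF_C j w).fun_mul tUinv
  have t1 := tprod.const_mul (-s)
  have t2 := tBinv.const_mul (-((ν - s) * θ j))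
  have := t1.fun_add t2
  have heq : (fun v : En n => -s * (v j * (1 - hinner v v)⁻¹)
      + -((ν - s) * θ j) * (conj (1 - hinner v θ))⁻¹) = Mfun θ s ν j := by
    funext v
    simp [Mfun]
    ring
  rw [heq] at this
  exact this

set_option maxHeartbeats 1000000 in
lemma wd_expg_M (θ : En n) (s ν : ℂ) (w : En n)
    (hU : (1 - hinner w w) ∈ Complex.slitPlane)
    (hA : (1 - hinner w θ) ∈ Complex.slitPlane)
    (hB : (conj (1 - hinner w θ)) ∈ Complex.slitPlane) (i j : Fin n) :
    wd (fun v => Complex.exp (gfun θ s ν v) * Mfun θ s ν j v) w i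
      = Complex.exp (gfun θ s ν w) *
          ((-(s * (1 - hinner w w)⁻¹ * conj (w i)) + (s+ν) * (1 - hinner w θ)⁻¹ * conj (θ i))
              * Mfun θ s ν j w
            - s * ((if i = j then 1 else 0) * (1 - hinner w w)⁻¹
              + w j * conj (w i) * ((1 - hinner w w)⁻¹ * (1 - hinner w w)⁻¹))) := by
  have hU0 := Complex.slitPlane_ne_zero hU
  have hA0 := Complex.slitPlane_ne_zero hA
  have hB0 := Complex.slitPlane_ne_zero hB
  have hder := (hasF_expg θ s ν w hU hA hB).fun_mul (hasF_M θ s ν j w hU0 hB0)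
  rw [wd, hder.fderiv]
  simp only [ContinuousLinearMap.add_apply, ContinuousLinearMap.smul_apply,
    DA_apply, DB_apply, DU_apply, DC_apply, smul_eq_mul]
  rcases eq_or_ne i j with h | h
  · subst h
    simp only [Mfun, Complex.conj_I, pow_two, mul_inv, eq_self_iff_true, if_true, map_one]
    ring_nf
    simp only [Complex.I_sq]
    ring
  · simp only [Mfun, Complex.conj_I, pow_two, mul_inv, if_neg h, if_neg (Ne.symm h), map_one]
    ring_nf
    simp only [Complex.I_sq]
    ring

end MainDeriv

section Glue
variable {n : ℕ}

lemma wd_congr {f g : En n → ℂ} {z : En n} (h : f =ᶠ[nhds z] g) (j : Fin n) :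
    wd f z j = wd g z j := by
  unfold wd
  rw [h.fderiv_eq]

lemma wdbar_congr {f g : En n → ℂ} {z : En n} (h : f =ᶠ[nhds z] g) (j : Fin n) :
    wdbar f z j = wdbar g z j := by
  unfold wdbar
  rw [h.fderiv_eq]

lemma slit_facts {θ : En n} (hθ : ‖θ‖ = 1) {w : En n} (hw : ‖w‖ < 1) :
    (1 - hinner w w) ∈ Complex.slitPlane ∧ (1 - hinner w θ) ∈ Complex.slitPlane
      ∧ (conj (1 - hinner w θ)) ∈ Complex.slitPlane := by
  have habs : ‖hinner w θ‖ < 1 := by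
    calc ‖hinner w θ‖ ≤ ‖w‖ * ‖θ‖ := abs_hinner_le w θ
      _ = ‖w‖ := by rw [hθ, mul_one]
      _ < 1 := hw
  have hA : 0 < (1 - hinner w θ).re := re_pos_of_lt _ habs
  refine ⟨?_, Or.inl hA, Or.inl (by rwa [Complex.conj_re])⟩
  left
  rw [hinner_self]
  have : (0:ℝ) < 1 - ‖w‖^2 := by nlinarith [norm_nonneg w]
  simp only [Complex.sub_re, Complex.one_re, Complex.ofReal_re]
  linarith

end Glue
end PKAux





set_option maxHeartbeats 1000000 in
lemma final_scalar (E s w N c d r : ℂ) (hc : (1:ℂ) - c ≠ 0) (hd : (1:ℂ) - d ≠ 0)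
    (hr : (1:ℂ) - r ≠ 0) :
    -4 * (1 - r) *
        (((E*(s*(1-r)⁻¹)*(s*(1-r)⁻¹) - s*E*((1-r)⁻¹*(1-r)⁻¹)) * r
          + (E*(s*(1-r)⁻¹)*((w-s)*(1-d)⁻¹)) * d
          + (-(E*((s+w)*(1-c)⁻¹)*(s*(1-r)⁻¹))) * c
          + (-(E*((s+w)*(1-c)⁻¹)*((w-s)*(1-d)⁻¹))) * 1
          + N * (-(s*E*(1-r)⁻¹))
          - ((E*(s*(1-r)⁻¹)*(s*(1-r)⁻¹)*r - s*E*((1-r)⁻¹*(1-r)⁻¹)*r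
                + E*(s*(1-r)⁻¹)*((w-s)*(1-d)⁻¹)*d - s*E*(1-r)⁻¹) * r
              + (-(E*((s+w)*(1-c)⁻¹)*(s*(1-r)⁻¹)*r)
                - E*((s+w)*(1-c)⁻¹)*((w-s)*(1-d)⁻¹)*d) * c))
        + w * (E * ((s+w) * (1-c)⁻¹ * c) + E * ((w - s) * (1-d)⁻¹ * d))
        + w^2 * E)
      + 4 * w^2 * E
    = (4*s*(N - s) + 4*w^2) * E := by
  have hKey : c * (1-c)⁻¹ + d * (1-d)⁻¹ - (1-c*d)*((1-c)⁻¹*(1-d)⁻¹) = -1 := by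
    field_simp
    ring
  have hU1 : ((1:ℂ)-r) * (1-r)⁻¹ = 1 := mul_inv_cancel₀ hr
  linear_combination
    (4*E*s*r*(1-r)⁻¹ - 4*E*s*r^2*(1-r)⁻¹ + 4*E*s*N - 4*E*s*w*d*(1-d)⁻¹
      + 4*E*s*w*d*r*(1-d)⁻¹ + 4*E*s*w*c*(1-c)⁻¹ - 4*E*s*w*c*r*(1-c)⁻¹
      - 4*E*s^2*r - 4*E*s^2*r*(1-r)⁻¹ + 4*E*s^2*r^2*(1-r)⁻¹ + 4*E*s^2*d*(1-d)⁻¹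
      - 4*E*s^2*d*r*(1-d)⁻¹ + 4*E*s^2*c*(1-c)⁻¹ - 4*E*s^2*c*r*(1-c)⁻¹) * hU1
    + (-4*E*w^2 + 4*E*w^2*r + 4*E*s^2 - 4*E*s^2*r) * hKey


open PKAux
set_option maxHeartbeats 1600000

/-- the Poisson kernel `P_λ^ν(·,θ)` is an eigenfunction of `H_ν` with
eigenvalue `λ² + 4ν² + n²`. -/
theorem poisson_kernel_eigenfunction
    (n : ℕ) (hn : 1 ≤ n) (ν : ℝ) (hν : 0 ≤ ν) (lam : ℂ) (θ : En n) (hθ : ‖θ‖ = 1) :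
    ∀ z ∈ ball (0 : En n) 1,
      Hnu ν (fun w =>
          (((1 - ‖w‖ ^ 2) / ‖1 - hinner w θ‖ ^ 2 : ℝ) : ℂ) ^ ((Complex.I * lam + n) / 2) *
            ((1 - conj (hinner w θ)) / (1 - hinner w θ)) ^ (ν : ℂ)) z
      = (lam ^ 2 + 4 * (ν : ℂ) ^ 2 + (n : ℂ) ^ 2) *
          ((((1 - ‖z‖ ^ 2) / ‖1 - hinner z θ‖ ^ 2 : ℝ) : ℂ) ^ ((Complex.I * lam + n) / 2) *
            ((1 - conj (hinner z θ)) / (1 - hinner z θ)) ^ (ν : ℂ)) := by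
  
  intro z hz
  have hz1 : ‖z‖ < 1 := mem_ball_zero_iff.mp hz
  set s : ℂ := (Complex.I * lam + n) / 2 with hs_def
  obtain ⟨hU, hA, hB⟩ := slit_facts hθ hz1
  have hU0 := Complex.slitPlane_ne_zero hU
  have hA0 := Complex.slitPlane_ne_zero hA
  have hB0 := Complex.slitPlane_ne_zero hB
  set f : En n → ℂ := fun w =>
      (((1 - ‖w‖ ^ 2) / ‖1 - hinner w θ‖ ^ 2 : ℝ) : ℂ) ^ s *
        ((1 - conj (hinner w θ)) / (1 - hinner w θ)) ^ (ν : ℂ) with hf_def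
  have hEqOn : Set.EqOn f (fun w => Complex.exp (gfun θ s ν w)) (ball 0 1) := by
    intro w hw
    exact kernel_eq_exp hθ (mem_ball_zero_iff.mp hw) s ν
  have hev : ∀ x : En n, x ∈ ball (0 : En n) 1 →
      f =ᶠ[nhds x] fun w => Complex.exp (gfun θ s ν w) :=
    fun x hx => Filter.eventuallyEq_of_mem (isOpen_ball.mem_nhds hx) hEqOn
  have hfz : f z = Complex.exp (gfun θ s ν z) := hEqOn hz
  have hwd : ∀ j, wd f z j = Complex.exp (gfun θ s ν z) *
      (-(s * (1 - hinner z z)⁻¹ * conj (z j)) + (s + ν) * (1 - hinner z θ)⁻¹ * conj (θ j)) :=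
    fun j => by rw [wd_congr (hev z hz) j, wd_expg θ s ν z hU hA hB j]
  have hwdbar : ∀ j, wdbar f z j = Complex.exp (gfun θ s ν z) * Mfun θ s ν j z :=
    fun j => by rw [wdbar_congr (hev z hz) j, wdbar_expg θ s ν z hU hA hB j]
  have hwd2 : ∀ i j, wd (fun w => wdbar f w j) z i
      = Complex.exp (gfun θ s ν z) *
          ((-(s * (1 - hinner z z)⁻¹ * conj (z i)) + (s+ν) * (1 - hinner z θ)⁻¹ * conj (θ i))
              * Mfun θ s ν j z
            - s * ((if i = j then 1 else 0) * (1 - hinner z z)⁻¹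
              + z j * conj (z i) * ((1 - hinner z z)⁻¹ * (1 - hinner z z)⁻¹))) := by
    intro i j
    have hEq2 : Set.EqOn (fun w => wdbar f w j)
        (fun w => Complex.exp (gfun θ s ν w) * Mfun θ s ν j w) (ball 0 1) := by
      intro w hw
      obtain ⟨hU', hA', hB'⟩ := slit_facts hθ (mem_ball_zero_iff.mp hw)
      simp only
      rw [wdbar_congr (hev w hw) j, wdbar_expg θ s ν w hU' hA' hB' j]
    rw [wd_congr (Filter.eventuallyEq_of_mem (isOpen_ball.mem_nhds hz) hEq2) i,
        wd_expg_M θ s ν z hU hA hB i j]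
  set E := Complex.exp (gfun θ s ν z) with hE_def
  set c := hinner z θ with hc_def
  set r := hinner z z with hr_def
  -- atom sums
  have hsum1 : ∑ i, z i * conj (z i) = r := by rw [hr_def]; rfl
  have hsum2 : ∑ i, z i * conj (θ i) = c := by rw [hc_def]; rfl
  have hsum3 : ∑ i, conj (z i) * θ i = conj c := by
    have h1 : conj c = ∑ i, conj (z i * conj (θ i)) := by
      rw [← map_sum, hc_def]; rfl
    rw [h1]
    refine Finset.sum_congr rfl fun i _ => ?_
    rw [map_mul, Complex.conj_conj]
  have hsum4 : ∑ i, θ i * conj (θ i) = 1 := by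
    have h := hinner_self θ
    rw [hθ] at h
    simpa [hinner] using h
  have hsumdelta : ∀ (φ : Fin n → ℂ) (i : Fin n),
      (∑ j, (if i = j then 1 else 0) * φ j) = φ i := by
    intro φ i
    simp [ite_mul]
  have hcomb : ∀ (a b c' d' : ℂ), (∑ j, (a * (z j * conj (z j)) + b * (conj (z j) * θ j)
      + c' * (z j * conj (θ j)) + d' * (θ j * conj (θ j))))
      = a * r + b * conj c + c' * c + d' * 1 := by
    intro a b c' d'
    simp only [Finset.sum_add_distrib, ← Finset.mul_sum, hsum1, hsum2, hsum3, hsum4]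
  -- first-order sum
  have hS1 : (∑ j, (z j * wd f z j - conj (z j) * wdbar f z j))
      = E * ((s+ν) * (1 - c)⁻¹ * c) + E * (((ν:ℂ) - s) * (conj (1 - c))⁻¹ * conj c) := by
    have hpt : ∀ j, z j * wd f z j - conj (z j) * wdbar f z j
        = 0 * (z j * conj (z j)) + (E * (((ν:ℂ)-s) * (conj (1 - c))⁻¹)) * (conj (z j) * θ j)
          + (E * ((s+ν) * (1 - c)⁻¹)) * (z j * conj (θ j)) + 0 * (θ j * conj (θ j)) := by
      intro j
      rw [hwd j, hwdbar j]
      simp only [Mfun, ← hc_def, ← hr_def]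
      ring
    rw [Finset.sum_congr rfl fun j _ => hpt j, hcomb]
    ring
  -- second-order double sum
  have hS2 : (∑ i, ∑ j, ((if i = j then 1 else 0) - z i * conj (z j))
        * wd (fun w => wdbar f w j) z i)
      = (E*(s*(1-r)⁻¹)*(s*(1-r)⁻¹) - s*E*((1-r)⁻¹*(1-r)⁻¹)) * r
          + (E*(s*(1-r)⁻¹)*(((ν:ℂ)-s)*(conj (1-c))⁻¹)) * conj c
          + (-(E*((s+ν)*(1-c)⁻¹)*(s*(1-r)⁻¹))) * c
          + (-(E*((s+ν)*(1-c)⁻¹)*(((ν:ℂ)-s)*(conj (1-c))⁻¹))) * 1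
          + (n : ℂ) * (-(s*E*(1-r)⁻¹))
          - ( (E*(s*(1-r)⁻¹)*(s*(1-r)⁻¹)*r - s*E*((1-r)⁻¹*(1-r)⁻¹)*r
                + E*(s*(1-r)⁻¹)*(((ν:ℂ)-s)*(conj (1-c))⁻¹)*conj c - s*E*(1-r)⁻¹) * r
              + (-(E*((s+ν)*(1-c)⁻¹)*(s*(1-r)⁻¹)*r)
                - E*((s+ν)*(1-c)⁻¹)*(((ν:ℂ)-s)*(conj (1-c))⁻¹)*conj c) * c ) := by
    have hsplit : ∀ i j, ((if i = j then 1 else 0) - z i * conj (z j))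
          * wd (fun w => wdbar f w j) z i
        = (if i = j then 1 else 0) * wd (fun w => wdbar f w j) z i
          - z i * (conj (z j) * wd (fun w => wdbar f w j) z i) := by
      intro i j
      ring
    have hstep : (∑ i, ∑ j, ((if i = j then 1 else 0) - z i * conj (z j))
          * wd (fun w => wdbar f w j) z i)
        = (∑ i, wd (fun w => wdbar f w i) z i)
          - ∑ i, z i * (∑ j, conj (z j) * wd (fun w => wdbar f w j) z i) := by
      rw [← Finset.sum_sub_distrib]
      refine Finset.sum_congr rfl fun i _ => ?_
      rw [Finset.sum_congr rfl fun j _ => hsplit i j, Finset.sum_sub_distrib]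
      congr 1
      · exact hsumdelta (fun j => wd (fun w => wdbar f w j) z i) i
      · rw [Finset.mul_sum]
    rw [hstep]
    -- part A
    have hptA : ∀ i, wd (fun w => wdbar f w i) z i
        = (E*(s*(1-r)⁻¹)*(s*(1-r)⁻¹) - s*E*((1-r)⁻¹*(1-r)⁻¹)) * (z i * conj (z i))
          + (E*(s*(1-r)⁻¹)*(((ν:ℂ)-s)*(conj (1-c))⁻¹)) * (conj (z i) * θ i)
          + (-(E*((s+ν)*(1-c)⁻¹)*(s*(1-r)⁻¹))) * (z i * conj (θ i))
          + (-(E*((s+ν)*(1-c)⁻¹)*(((ν:ℂ)-s)*(conj (1-c))⁻¹))) * (θ i * conj (θ i))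
          + (-(s*E*(1-r)⁻¹)) := by
      intro i
      rw [hwd2 i i]
      simp only [eq_self_iff_true, if_true, Mfun, ← hc_def, ← hr_def]
      ring
    have hA' : (∑ i, wd (fun w => wdbar f w i) z i)
        = (E*(s*(1-r)⁻¹)*(s*(1-r)⁻¹) - s*E*((1-r)⁻¹*(1-r)⁻¹)) * r
          + (E*(s*(1-r)⁻¹)*(((ν:ℂ)-s)*(conj (1-c))⁻¹)) * conj c
          + (-(E*((s+ν)*(1-c)⁻¹)*(s*(1-r)⁻¹))) * c
          + (-(E*((s+ν)*(1-c)⁻¹)*(((ν:ℂ)-s)*(conj (1-c))⁻¹))) * 1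
          + (n : ℂ) * (-(s*E*(1-r)⁻¹)) := by
      rw [Finset.sum_congr rfl fun i _ => hptA i]
      rw [Finset.sum_add_distrib, hcomb, Finset.sum_const, Finset.card_univ,
        Fintype.card_fin, nsmul_eq_mul]
    -- part B
    have hptB : ∀ i j, conj (z j) * wd (fun w => wdbar f w j) z i
        = (E * (-(s*(1-r)⁻¹*conj (z i)) + (s+ν)*(1-c)⁻¹*conj (θ i)) * (-(s*(1-r)⁻¹))
              - s*E*((1-r)⁻¹*(1-r)⁻¹)*conj (z i)) * (z j * conj (z j))
          + (E * (-(s*(1-r)⁻¹*conj (z i)) + (s+ν)*(1-c)⁻¹*conj (θ i))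
              * (-(((ν:ℂ)-s)*(conj (1-c))⁻¹))) * (conj (z j) * θ j)
          + 0 * (z j * conj (θ j)) + 0 * (θ j * conj (θ j))
          + (if i = j then 1 else 0) * (-(s*E*(1-r)⁻¹) * conj (z j)) := by
      intro i j
      rw [hwd2 i j]
      simp only [Mfun, ← hc_def, ← hr_def]
      ring
    have hinnerB : ∀ i, (∑ j, conj (z j) * wd (fun w => wdbar f w j) z i)
        = (E * (-(s*(1-r)⁻¹*conj (z i)) + (s+ν)*(1-c)⁻¹*conj (θ i)) * (-(s*(1-r)⁻¹))
              - s*E*((1-r)⁻¹*(1-r)⁻¹)*conj (z i)) * r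
          + (E * (-(s*(1-r)⁻¹*conj (z i)) + (s+ν)*(1-c)⁻¹*conj (θ i))
              * (-(((ν:ℂ)-s)*(conj (1-c))⁻¹))) * conj c
          + (-(s*E*(1-r)⁻¹) * conj (z i)) := by
      intro i
      rw [Finset.sum_congr rfl fun j _ => hptB i j]
      rw [Finset.sum_add_distrib,
        hsumdelta (fun j => -(s*E*(1-r)⁻¹) * conj (z j)) i]
      have := hcomb (E * (-(s*(1-r)⁻¹*conj (z i)) + (s+ν)*(1-c)⁻¹*conj (θ i)) * (-(s*(1-r)⁻¹))
              - s*E*((1-r)⁻¹*(1-r)⁻¹)*conj (z i))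
          (E * (-(s*(1-r)⁻¹*conj (z i)) + (s+ν)*(1-c)⁻¹*conj (θ i))
              * (-(((ν:ℂ)-s)*(conj (1-c))⁻¹))) 0 0
      rw [this]
      ring
    have hptC : ∀ i, z i * (∑ j, conj (z j) * wd (fun w => wdbar f w j) z i)
        = (E*(s*(1-r)⁻¹)*(s*(1-r)⁻¹)*r - s*E*((1-r)⁻¹*(1-r)⁻¹)*r
              + E*(s*(1-r)⁻¹)*(((ν:ℂ)-s)*(conj (1-c))⁻¹)*conj c - s*E*(1-r)⁻¹)
            * (z i * conj (z i))
          + 0 * (conj (z i) * θ i)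
          + (-(E*((s+ν)*(1-c)⁻¹)*(s*(1-r)⁻¹)*r)
              - E*((s+ν)*(1-c)⁻¹)*(((ν:ℂ)-s)*(conj (1-c))⁻¹)*conj c) * (z i * conj (θ i))
          + 0 * (θ i * conj (θ i)) := by
      intro i
      rw [hinnerB i]
      ring
    have hB' : (∑ i, z i * (∑ j, conj (z j) * wd (fun w => wdbar f w j) z i))
        = (E*(s*(1-r)⁻¹)*(s*(1-r)⁻¹)*r - s*E*((1-r)⁻¹*(1-r)⁻¹)*r
              + E*(s*(1-r)⁻¹)*(((ν:ℂ)-s)*(conj (1-c))⁻¹)*conj c - s*E*(1-r)⁻¹) * r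
          + (-(E*((s+ν)*(1-c)⁻¹)*(s*(1-r)⁻¹)*r)
              - E*((s+ν)*(1-c)⁻¹)*(((ν:ℂ)-s)*(conj (1-c))⁻¹)*conj c) * c := by
      rw [Finset.sum_congr rfl fun i _ => hptC i, hcomb]
      ring
    rw [hA', hB']
  -- assemble
  have hnorm : ((‖z‖:ℂ))^2 = r := by
    rw [hr_def, hinner_self]
    norm_cast
  have hBc : conj ((1:ℂ) - c) = 1 - conj c := by rw [map_sub, map_one]
  have heig : lam ^ 2 + 4 * (ν:ℂ) ^ 2 + (n:ℂ) ^ 2 = 4*s*((n:ℂ) - s) + 4*(ν:ℂ)^2 := by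
    rw [hs_def]
    have hI : Complex.I^2 = -1 := Complex.I_sq
    linear_combination lam^2 * hI
  show Hnu ν f z = (lam ^ 2 + 4 * (ν:ℂ) ^ 2 + (n:ℂ) ^ 2) * f z
  unfold Hnu
  rw [hS1, hS2, hfz, hnorm, heig, hBc]
  have hcne : (1:ℂ) - c ≠ 0 := hA0
  have hdne : (1:ℂ) - conj c ≠ 0 := by rwa [hBc] at hB0
  have hrne : (1:ℂ) - r ≠ 0 := hU0
  exact final_scalar E s (ν:ℂ) (n:ℂ) c (conj c) r hcne hdne hrne
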